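/- Let t ≥ 3 and n ≥ 2t + 17 be integers, and let H be a 3-uniform hypergraph on n vertices with minimum degree δ₁(H) ≥ g(n,t) that contains no linear path of length t + 1. If P = (x₀, x₁, ..., x_{2t}) is a linear path of length t in H, then for every k ∈ [0, t−1], d_P(0, 2k+1) + d_P(2t, 2k+1) ≤ n − 2t − 1. -/
import Mathlib


/-- The degree of a vertex `v` in a hypergraph with edge set `E`:
the number of edges containing `v`. -/
def hdegree {V : Type*} [DecidableEq V] (E : Finset (Finset V)) (v : V) : ℕ :=
  (E.filter (fun e => v ∈ e)).card

/-- The hypergraph with edge set `E` contains a linear path of length `k`: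
a collection of `k` (distinct) edges `e₁, …, e_k` such that `|eᵢ ∩ e_j| = 1`
if `|i - j| = 1` and `eᵢ ∩ e_j = ∅` otherwise. -/
def HasLinearPath {V : Type*} [DecidableEq V] (E : Finset (Finset V)) (k : ℕ) : Prop :=
  ∃ f : Fin k → Finset V, Function.Injective f ∧ (∀ i, f i ∈ E) ∧
    ∀ i j : Fin k, i ≠ j →
      (((i : ℕ) + 1 = j ∨ (j : ℕ) + 1 = i) → (f i ∩ f j).card = 1) ∧
      (¬((i : ℕ) + 1 = j ∨ (j : ℕ) + 1 = i) → f i ∩ f j = ∅)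

/-- `x = (x₀, x₁, …, x_{2t})` is a linear path of length `t` in the hypergraph with
edge set `E`: the `2t+1` vertices are distinct and `{x_{2i}, x_{2i+1}, x_{2i+2}} ∈ E`
for each `i ∈ [0, t-1]`. -/
def IsLinearPathSeq {V : Type*} [DecidableEq V] (E : Finset (Finset V)) (t : ℕ)
    (x : Fin (2 * t + 1) → V) : Prop :=
  Function.Injective x ∧
  ∀ i : Fin t,
    ({x ⟨2 * i, by have := i.isLt; omega⟩,
      x ⟨2 * i + 1, by have := i.isLt; omega⟩,
      x ⟨2 * i + 2, by have := i.isLt; omega⟩} : Finset V) ∈ E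

/-- `dP E x a b` is the number of vertices `y` outside the path `x` such that
`{x_a, x_b, y}` is an edge; this is `d_P(a, b)` in the paper. -/
def dP {V : Type*} [Fintype V] [DecidableEq V] (E : Finset (Finset V)) {t : ℕ}
    (x : Fin (2 * t + 1) → V) (a b : Fin (2 * t + 1)) : ℕ :=
  (Finset.univ.filter
    (fun y => (∀ i, y ≠ x i) ∧ ({x a, x b, y} : Finset V) ∈ E)).card

/-- The function `g(n,t)` from the paper:
`g(n,t) = ((t-1)/2)n + (3/2)t² - (9/2)t + 6` for odd `t`, and
`g(n,t) = ((t-2)/2)n + (3/2)t² - (5/2)t + 6` for even `t`. -/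
def gQ (n t : ℕ) : ℚ :=
  if Odd t then ((t : ℚ) - 1) / 2 * n + 3 / 2 * t ^ 2 - 9 / 2 * t + 6
  else ((t : ℚ) - 2) / 2 * n + 3 / 2 * t ^ 2 - 5 / 2 * t + 6



/-- aux: pick distinct elements from two large subsets -/
theorem exists_pair_ne_of_card' {V : Type*} [DecidableEq V] (A B C : Finset V)
    (hA : A ⊆ C) (hB : B ⊆ C) (hC : 2 ≤ C.card) (h : C.card < A.card + B.card) :
    ∃ y₁ ∈ A, ∃ y₂ ∈ B, y₁ ≠ y₂ := by
  have hAc : A.card ≤ C.card := Finset.card_le_card hA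
  have hBc : B.card ≤ C.card := Finset.card_le_card hB
  by_cases h2 : 2 ≤ A.card
  · obtain ⟨y₂, hy₂⟩ := Finset.card_pos.mp (by omega : 0 < B.card)
    have : 0 < (A.erase y₂).card := by
      have := Finset.pred_card_le_card_erase (a := y₂) (s := A); omega
    obtain ⟨y₁, hy₁⟩ := Finset.card_pos.mp this
    exact ⟨y₁, Finset.mem_of_mem_erase hy₁, y₂, hy₂, Finset.ne_of_mem_erase hy₁⟩
  · have h2B : 2 ≤ B.card := by omega
    obtain ⟨y₁, hy₁⟩ := Finset.card_pos.mp (by omega : 0 < A.card)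
    have : 0 < (B.erase y₁).card := by
      have := Finset.pred_card_le_card_erase (a := y₁) (s := B); omega
    obtain ⟨y₂, hy₂⟩ := Finset.card_pos.mp this
    exact ⟨y₁, hy₁, y₂, Finset.mem_of_mem_erase hy₂, (Finset.ne_of_mem_erase hy₂).symm⟩

/-- the i-th edge of the path x -/
def pe {V : Type*} [DecidableEq V] {t : ℕ} (x : Fin (2 * t + 1) → V) (i : Fin t) : Finset V :=
  {x ⟨2 * i, by have := i.isLt; omega⟩,
   x ⟨2 * i + 1, by have := i.isLt; omega⟩,
   x ⟨2 * i + 2, by have := i.isLt; omega⟩}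

theorem mem_pe {V : Type*} [DecidableEq V] {t : ℕ} (x : Fin (2 * t + 1) → V) (i : Fin t)
    (v : V) : v ∈ pe x i ↔ v = x ⟨2 * i, by have := i.isLt; omega⟩ ∨
      v = x ⟨2 * i + 1, by have := i.isLt; omega⟩ ∨
      v = x ⟨2 * i + 2, by have := i.isLt; omega⟩ := by
  simp [pe]

/-- the new path of length t+1 -/
def npf {V : Type*} [DecidableEq V] {t : ℕ} (x : Fin (2 * t + 1) → V) (y₁ y₂ : V)
    (k : ℕ) (hkt : k + 1 ≤ t) : Fin (t + 1) → Finset V := fun m =>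
  if h1 : (m : ℕ) < k then pe x ⟨k - 1 - (m : ℕ), by omega⟩
  else if h2 : (m : ℕ) = k then {x ⟨0, by omega⟩, x ⟨2 * k + 1, by omega⟩, y₁}
  else if h3 : (m : ℕ) = k + 1 then {x ⟨2 * t, by omega⟩, x ⟨2 * k + 1, by omega⟩, y₂}
  else pe x ⟨t + k + 1 - (m : ℕ), by have := m.isLt; omega⟩

set_option maxHeartbeats 1000000 in
theorem npf_hasLinearPath (t : ℕ) (ht : t ≥ 3) {V : Type*} [DecidableEq V]
    (E : Finset (Finset V)) (hE : ∀ e ∈ E, e.card = 3)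
    (x : Fin (2 * t + 1) → V) (hxinj : Function.Injective x)
    (hxedge : ∀ i : Fin t, pe x i ∈ E)
    (k : ℕ) (hk : k ≤ t - 1)
    (y₁ y₂ : V) (hy12 : y₁ ≠ y₂)
    (hy1x : ∀ i, y₁ ≠ x i) (hy2x : ∀ i, y₂ ≠ x i)
    (hg1E : ({x ⟨0, by omega⟩, x ⟨2 * k + 1, by omega⟩, y₁} : Finset V) ∈ E)
    (hg2E : ({x ⟨2 * t, by omega⟩, x ⟨2 * k + 1, by omega⟩, y₂} : Finset V) ∈ E) :
    HasLinearPath E (t + 1) := by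
  have xeq : ∀ (p q : ℕ) (hp : p < 2*t+1) (hq : q < 2*t+1), p = q → x ⟨p, hp⟩ = x ⟨q, hq⟩ := by
    intro p q hp hq h; subst h; rfl
  have xinj : ∀ (p q : ℕ) (hp : p < 2*t+1) (hq : q < 2*t+1), x ⟨p, hp⟩ = x ⟨q, hq⟩ → p = q := by
    intro p q hp hq h; exact congrArg Fin.val (hxinj h)
  have hkt : k + 1 ≤ t := by omega
  have EE0 : ∀ i j : Fin t, (i:ℕ) + 2 ≤ (j:ℕ) → pe x i ∩ pe x j = ∅ := by
    intro i j hij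
    rw [Finset.eq_empty_iff_forall_notMem]
    intro v hv
    rw [Finset.mem_inter, mem_pe, mem_pe] at hv
    obtain ⟨rfl | rfl | rfl, h | h | h⟩ := hv <;>
      exact absurd (xinj _ _ _ _ h) (by omega)
  have EE1 : ∀ i j : Fin t, (i:ℕ) + 1 = (j:ℕ) →
      pe x i ∩ pe x j = {x ⟨2*(i:ℕ)+2, by have := i.isLt; omega⟩} := by
    intro i j hij
    ext v
    rw [Finset.mem_inter, mem_pe, mem_pe, Finset.mem_singleton]
    constructor
    · rintro ⟨rfl | rfl | rfl, h | h | h⟩ <;>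
        first
          | rfl
          | exact absurd (xinj _ _ _ _ h) (by omega)
    · rintro rfl
      exact ⟨Or.inr (Or.inr rfl), Or.inl (xeq _ _ _ _ (by omega))⟩
  have EE0r : ∀ i j : Fin t, (j:ℕ) + 2 ≤ (i:ℕ) → pe x i ∩ pe x j = ∅ := by
    intro i j hij; rw [Finset.inter_comm]; exact EE0 j i hij
  have EE1r : ∀ i j : Fin t, (j:ℕ) + 1 = (i:ℕ) →
      pe x i ∩ pe x j = {x ⟨2*(j:ℕ)+2, by have := j.isLt; omega⟩} := by
    intro i j hij; rw [Finset.inter_comm]; exact EE1 j i hij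
  have EG1 : ∀ i : Fin t, (i:ℕ) = 0 → 1 ≤ k →
      pe x i ∩ ({x ⟨0, by omega⟩, x ⟨2*k+1, by omega⟩, y₁} : Finset V) =
        {x ⟨2*(i:ℕ), by have := i.isLt; omega⟩} := by
    intro i hi hk1
    ext v
    simp only [Finset.mem_inter, mem_pe, Finset.mem_insert, Finset.mem_singleton]
    constructor
    · rintro ⟨rfl | rfl | rfl, h | h | h⟩ <;>
        first
          | rfl
          | exact absurd (xinj _ _ _ _ h) (by omega)
          | exact absurd h.symm (hy1x _)
    · rintro rfl
      exact ⟨Or.inl rfl, Or.inl (xeq _ _ _ _ (by omega))⟩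
  have EG1e : ∀ i : Fin t, (i:ℕ) ≠ 0 → (i:ℕ) ≠ k →
      pe x i ∩ ({x ⟨0, by omega⟩, x ⟨2*k+1, by omega⟩, y₁} : Finset V) = ∅ := by
    intro i hi0 hik
    rw [Finset.eq_empty_iff_forall_notMem]
    intro v hv
    simp only [Finset.mem_inter, mem_pe, Finset.mem_insert, Finset.mem_singleton] at hv
    obtain ⟨rfl | rfl | rfl, h | h | h⟩ := hv <;>
      first
        | exact absurd (xinj _ _ _ _ h) (by omega)
        | exact absurd h.symm (hy1x _)
  have G1e : ∀ i : Fin t, (i:ℕ) ≠ 0 → (i:ℕ) ≠ k →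
      ({x ⟨0, by omega⟩, x ⟨2*k+1, by omega⟩, y₁} : Finset V) ∩ pe x i = ∅ := by
    intro i hi0 hik; rw [Finset.inter_comm]; exact EG1e i hi0 hik
  have EG2e : ∀ i : Fin t, (i:ℕ) ≠ t - 1 → (i:ℕ) ≠ k →
      pe x i ∩ ({x ⟨2*t, by omega⟩, x ⟨2*k+1, by omega⟩, y₂} : Finset V) = ∅ := by
    intro i hi0 hik
    rw [Finset.eq_empty_iff_forall_notMem]
    intro v hv
    simp only [Finset.mem_inter, mem_pe, Finset.mem_insert, Finset.mem_singleton] at hv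
    obtain ⟨rfl | rfl | rfl, h | h | h⟩ := hv <;>
      first
        | exact absurd (xinj _ _ _ _ h) (by omega)
        | exact absurd h.symm (hy2x _)
  have G2e : ∀ i : Fin t, (i:ℕ) ≠ t - 1 → (i:ℕ) ≠ k →
      ({x ⟨2*t, by omega⟩, x ⟨2*k+1, by omega⟩, y₂} : Finset V) ∩ pe x i = ∅ := by
    intro i hi0 hik; rw [Finset.inter_comm]; exact EG2e i hi0 hik
  have G2E : ∀ j : Fin t, (j:ℕ) = t - 1 → k ≠ t - 1 →
      ({x ⟨2*t, by omega⟩, x ⟨2*k+1, by omega⟩, y₂} : Finset V) ∩ pe x j =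
        {x ⟨2*t, by omega⟩} := by
    intro j hj hkt1
    ext v
    simp only [Finset.mem_inter, mem_pe, Finset.mem_insert, Finset.mem_singleton]
    constructor
    · rintro ⟨rfl | rfl | rfl, h | h | h⟩ <;>
        first
          | rfl
          | exact absurd (xinj _ _ _ _ h) (by omega)
          | exact absurd h (hy2x _)
          | exact absurd h.symm (hy2x _)
    · rintro rfl
      exact ⟨Or.inl rfl, Or.inr (Or.inr (xeq _ _ _ _ (by omega)))⟩
  have G1G2 : ({x ⟨0, by omega⟩, x ⟨2*k+1, by omega⟩, y₁} : Finset V) ∩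
      ({x ⟨2*t, by omega⟩, x ⟨2*k+1, by omega⟩, y₂} : Finset V) =
      ({x ⟨2*k+1, by omega⟩} : Finset V) := by
    ext v
    simp only [Finset.mem_inter, Finset.mem_insert, Finset.mem_singleton]
    constructor
    · rintro ⟨rfl | rfl | rfl, h | h | h⟩ <;>
        first
          | rfl
          | exact absurd (xinj _ _ _ _ h) (by omega)
          | exact absurd h (hy1x _)
          | exact absurd h.symm (hy1x _)
          | exact absurd h (hy2x _)
          | exact absurd h.symm (hy2x _)
          | exact absurd h hy12
    · rintro rfl
      exact ⟨Or.inr (Or.inl rfl), Or.inr (Or.inl rfl)⟩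
  -- unfolding the new path
  have hfP1 : ∀ (m : Fin (t+1)) (h : (m:ℕ) < k),
      npf x y₁ y₂ k hkt m = pe x ⟨k - 1 - (m:ℕ), by omega⟩ := by
    intro m h; simp only [npf]; rw [dif_pos h]
  have hfg1 : ∀ (m : Fin (t+1)), (m:ℕ) = k →
      npf x y₁ y₂ k hkt m = {x ⟨0, by omega⟩, x ⟨2*k+1, by omega⟩, y₁} := by
    intro m h; simp only [npf]; rw [dif_neg (by omega), dif_pos h]
  have hfg2 : ∀ (m : Fin (t+1)), (m:ℕ) = k + 1 →
      npf x y₁ y₂ k hkt m = {x ⟨2*t, by omega⟩, x ⟨2*k+1, by omega⟩, y₂} := by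
    intro m h; simp only [npf]; rw [dif_neg (by omega), dif_neg (by omega), dif_pos h]
  have hfP2 : ∀ (m : Fin (t+1)) (h : k + 2 ≤ (m:ℕ)),
      npf x y₁ y₂ k hkt m = pe x ⟨t + k + 1 - (m:ℕ), by have := m.isLt; omega⟩ := by
    intro m h; simp only [npf]
    rw [dif_neg (by omega), dif_neg (by omega), dif_neg (by omega)]
  have hmemE : ∀ m, npf x y₁ y₂ k hkt m ∈ E := by
    intro m
    by_cases h1 : (m:ℕ) < k
    · rw [hfP1 m h1]; exact hxedge _
    · by_cases h2 : (m:ℕ) = k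
      · rw [hfg1 m h2]; exact hg1E
      · by_cases h3 : (m:ℕ) = k + 1
        · rw [hfg2 m h3]; exact hg2E
        · rw [hfP2 m (by omega)]; exact hxedge _
  -- the key pairwise intersection computation
  have key : ∀ i j : Fin (t+1), (i:ℕ) < (j:ℕ) →
      (((i:ℕ) + 1 = (j:ℕ) → (npf x y₁ y₂ k hkt i ∩ npf x y₁ y₂ k hkt j).card = 1) ∧
       ((i:ℕ) + 1 ≠ (j:ℕ) → npf x y₁ y₂ k hkt i ∩ npf x y₁ y₂ k hkt j = ∅)) := by
    intro i j hij
    have hjt := j.isLt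
    have hit := i.isLt
    by_cases hik : (i:ℕ) < k
    · by_cases hjk : (j:ℕ) < k
      · -- both in first block
        rw [hfP1 i hik, hfP1 j hjk]
        constructor
        · intro hadj
          rw [EE1r ⟨k-1-(i:ℕ), by omega⟩ ⟨k-1-(j:ℕ), by omega⟩ (by simp only [Fin.val_mk]; omega)]
          exact Finset.card_singleton _
        · intro hnadj
          exact EE0r ⟨k-1-(i:ℕ), by omega⟩ ⟨k-1-(j:ℕ), by omega⟩ (by simp only [Fin.val_mk]; omega)
      · by_cases hjk2 : (j:ℕ) = k
        · rw [hfP1 i hik, hfg1 j hjk2]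
          constructor
          · intro hadj
            rw [EG1 ⟨k-1-(i:ℕ), by omega⟩ (by simp only [Fin.val_mk]; omega) (by omega)]
            exact Finset.card_singleton _
          · intro hnadj
            exact EG1e ⟨k-1-(i:ℕ), by omega⟩ (by simp only [Fin.val_mk]; omega)
              (by simp only [Fin.val_mk]; omega)
        · by_cases hjk3 : (j:ℕ) = k + 1
          · rw [hfP1 i hik, hfg2 j hjk3]
            constructor
            · intro hadj; exact absurd hadj (by omega)
            · intro hnadj
              exact EG2e ⟨k-1-(i:ℕ), by omega⟩ (by simp only [Fin.val_mk]; omega)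
                (by simp only [Fin.val_mk]; omega)
          · rw [hfP1 i hik, hfP2 j (by omega)]
            constructor
            · intro hadj; exact absurd hadj (by omega)
            · intro hnadj
              exact EE0 ⟨k-1-(i:ℕ), by omega⟩ ⟨t+k+1-(j:ℕ), by omega⟩
                (by simp only [Fin.val_mk]; omega)
    · by_cases hik2 : (i:ℕ) = k
      · by_cases hjk3 : (j:ℕ) = k + 1
        · rw [hfg1 i hik2, hfg2 j hjk3]
          constructor
          · intro hadj; rw [G1G2]; exact Finset.card_singleton _
          · intro hnadj; exact absurd (by omega : (i:ℕ) + 1 = (j:ℕ)) hnadj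
        · rw [hfg1 i hik2, hfP2 j (by omega)]
          constructor
          · intro hadj; exact absurd hadj (by omega)
          · intro hnadj
            exact G1e ⟨t+k+1-(j:ℕ), by omega⟩ (by simp only [Fin.val_mk]; omega)
              (by simp only [Fin.val_mk]; omega)
      · by_cases hik3 : (i:ℕ) = k + 1
        · rw [hfg2 i hik3, hfP2 j (by omega)]
          constructor
          · intro hadj
            rw [G2E ⟨t+k+1-(j:ℕ), by omega⟩ (by simp only [Fin.val_mk]; omega) (by omega)]
            exact Finset.card_singleton _
          · intro hnadj
            exact G2e ⟨t+k+1-(j:ℕ), by omega⟩ (by simp only [Fin.val_mk]; omega)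
              (by simp only [Fin.val_mk]; omega)
        · rw [hfP2 i (by omega), hfP2 j (by omega)]
          constructor
          · intro hadj
            rw [EE1r ⟨t+k+1-(i:ℕ), by omega⟩ ⟨t+k+1-(j:ℕ), by omega⟩
              (by simp only [Fin.val_mk]; omega)]
            exact Finset.card_singleton _
          · intro hnadj
            exact EE0r ⟨t+k+1-(i:ℕ), by omega⟩ ⟨t+k+1-(j:ℕ), by omega⟩
              (by simp only [Fin.val_mk]; omega)
  have hcond : ∀ i j : Fin (t+1), i ≠ j →
      (((i:ℕ) + 1 = (j:ℕ) ∨ (j:ℕ) + 1 = (i:ℕ)) →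
        (npf x y₁ y₂ k hkt i ∩ npf x y₁ y₂ k hkt j).card = 1) ∧
      (¬((i:ℕ) + 1 = (j:ℕ) ∨ (j:ℕ) + 1 = (i:ℕ)) →
        npf x y₁ y₂ k hkt i ∩ npf x y₁ y₂ k hkt j = ∅) := by
    intro i j hij
    have hne : (i:ℕ) ≠ (j:ℕ) := fun hc => hij (Fin.ext hc)
    rcases Nat.lt_or_ge (i:ℕ) (j:ℕ) with h | h
    · constructor
      · intro hadj
        exact (key i j h).1 (by omega)
      · intro hnadj
        exact (key i j h).2 (fun hc => hnadj (Or.inl hc))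
    · have hji : (j:ℕ) < (i:ℕ) := by omega
      constructor
      · intro hadj
        rw [Finset.inter_comm]
        exact (key j i hji).1 (by omega)
      · intro hnadj
        rw [Finset.inter_comm]
        exact (key j i hji).2 (fun hc => hnadj (Or.inr hc))
  refine ⟨npf x y₁ y₂ k hkt, ?_, hmemE, hcond⟩
  intro i j hfij
  by_contra hne
  have h3 : (npf x y₁ y₂ k hkt i).card = 3 := hE _ (hmemE i)
  have hii : npf x y₁ y₂ k hkt i ∩ npf x y₁ y₂ k hkt j = npf x y₁ y₂ k hkt i := by
    rw [hfij, Finset.inter_self]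
  by_cases hadj : ((i:ℕ) + 1 = (j:ℕ) ∨ (j:ℕ) + 1 = (i:ℕ))
  · have := (hcond i j hne).1 hadj
    rw [hii] at this
    omega
  · have := (hcond i j hne).2 hadj
    rw [hii] at this
    rw [this] at h3
    simp at h3

set_option maxHeartbeats 1000000 in
theorem dP_odd_sum_le_n
    (t n : ℕ) (ht : t ≥ 3) (hn : n ≥ 2 * t + 17)
    (V : Type*) [Fintype V] [DecidableEq V] (hV : Fintype.card V = n)
    (E : Finset (Finset V)) (hE : ∀ e ∈ E, e.card = 3)
    (hdeg : ∀ v : V, gQ n t ≤ (hdegree E v : ℚ))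
    (hfree : ¬ HasLinearPath E (t + 1))
    (x : Fin (2 * t + 1) → V) (hx : IsLinearPathSeq E t x)
    (k : ℕ) (hk : k ≤ t - 1) :
    dP E x ⟨0, by omega⟩ ⟨2 * k + 1, by omega⟩ +
      dP E x ⟨2 * t, by omega⟩ ⟨2 * k + 1, by omega⟩ ≤ n - 2 * t - 1 := by
  by_contra hcon
  push_neg at hcon
  obtain ⟨hxinj, hxedge⟩ := hx
  obtain ⟨A, hAcard, hAmem⟩ :
      ∃ A : Finset V, dP E x ⟨0, by omega⟩ ⟨2 * k + 1, by omega⟩ = A.card ∧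
        ∀ y ∈ A, (∀ i, y ≠ x i) ∧
          ({x ⟨0, by omega⟩, x ⟨2 * k + 1, by omega⟩, y} : Finset V) ∈ E :=
    ⟨_, by rw [dP], fun y hy => (Finset.mem_filter.mp hy).2⟩
  obtain ⟨B, hBcard, hBmem⟩ :
      ∃ B : Finset V, dP E x ⟨2 * t, by omega⟩ ⟨2 * k + 1, by omega⟩ = B.card ∧
        ∀ y ∈ B, (∀ i, y ≠ x i) ∧
          ({x ⟨2 * t, by omega⟩, x ⟨2 * k + 1, by omega⟩, y} : Finset V) ∈ E :=
    ⟨_, by rw [dP], fun y hy => (Finset.mem_filter.mp hy).2⟩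
  rw [hAcard, hBcard] at hcon
  -- the complement of the path vertices
  have hCcard : ((Finset.image x Finset.univ)ᶜ : Finset V).card = n - (2 * t + 1) := by
    rw [Finset.card_compl, Finset.card_image_of_injective _ hxinj,
      Finset.card_univ, Fintype.card_fin, hV]
  have hsubC : ∀ (D : Finset V), (∀ y ∈ D, ∀ i, y ≠ x i) →
      D ⊆ (Finset.image x Finset.univ)ᶜ := by
    intro D hD y hy
    simp only [Finset.mem_compl, Finset.mem_image]
    rintro ⟨i, -, hi⟩
    exact hD y hy i hi.symm
  obtain ⟨y₁, hy₁, y₂, hy₂, hy12⟩ :=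
    exists_pair_ne_of_card' A B _ (hsubC A fun y hy => (hAmem y hy).1)
      (hsubC B fun y hy => (hBmem y hy).1) (by omega) (by omega)
  obtain ⟨hy1x, hg1E⟩ := hAmem y₁ hy₁
  obtain ⟨hy2x, hg2E⟩ := hBmem y₂ hy₂
  exact hfree (npf_hasLinearPath t ht E hE x hxinj (fun i => hxedge i) k hk
    y₁ y₂ hy12 hy1x hy2x hg1E hg2E)
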